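/- Let X, Y, Z be n×n Hermitian matrices with e^{iZ} = e^{iX} e^{iY} and ‖Z‖ < π. If there exists r ∈ [0,1] such that λ_k(X) = r·λ_k(Z) and λ_k(Y) = (1−r)·λ_k(Z) for every k = 1, …, n (eigenvalues arranged in non-increasing order), then X = rZ and Y = (1−r)Z. -/

import Mathlib

open Matrix
open scoped ComplexOrder

noncomputable section

/-- The positive semidefinite square root of a positive semidefinite matrix
(the definition Mathlib had in December 2024, since removed) -/
noncomputable def Matrix.PosSemidef.sqrt {m : Type*} [Fintype m] [DecidableEq m]
    {A : Matrix m m ℂ} (hA : A.PosSemidef) : Matrix m m ℂ :=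
  hA.1.eigenvectorUnitary.1 * diagonal ((↑) ∘ (√·) ∘ hA.1.eigenvalues) *
  (star hA.1.eigenvectorUnitary : Matrix m m ℂ)

theorem Matrix.PosSemidef.posSemidef_sqrt {m : Type*} [Fintype m] [DecidableEq m]
    {A : Matrix m m ℂ} (hA : A.PosSemidef) : PosSemidef hA.sqrt := by
  apply PosSemidef.mul_mul_conjTranspose_same
  refine posSemidef_diagonal_iff.mpr fun i ↦ ?_
  exact Complex.zero_le_real.mpr (Real.sqrt_nonneg _)

/-- n×n complex matrices -/
abbrev Mat (n : ℕ) := Matrix (Fin n) (Fin n) ℂ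

/-- modulus |A| = sqrt (Aᴴ A) -/
noncomputable def matAbs {n : ℕ} (A : Mat n) : Mat n :=
  (Matrix.posSemidef_conjTranspose_mul_self A).sqrt

/-- spectral (operator) norm -/
noncomputable def specNorm {n : ℕ} (A : Mat n) : ℝ :=
  ‖Matrix.toEuclideanCLM (𝕜 := ℂ) (n := Fin n) A‖

/-- Löwner order: `A ≤ B` iff `B - A` is positive semidefinite -/
def loewnerLE {n : ℕ} (A B : Mat n) : Prop := (B - A).PosSemidef

/-- singular values of `A`, arranged in non-increasing order -/
noncomputable def sval {n : ℕ} (A : Mat n) : Fin n → ℝ :=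
  fun i =>
    let e := ((Matrix.posSemidef_conjTranspose_mul_self A).posSemidef_sqrt).1.eigenvalues
    (e ∘ Tuple.sort e) i.rev

/-- singular values indexed by naturals (0 beyond the size) -/
noncomputable def svalNat {n : ℕ} (A : Mat n) (k : ℕ) : ℝ :=
  if h : k < n then sval A ⟨k, h⟩ else 0

/-- eigenvalues of a Hermitian matrix, arranged in non-increasing order -/
noncomputable def eigsDesc {n : ℕ} {A : Mat n} (hA : A.IsHermitian) : Fin n → ℝ :=
  fun i => (hA.eigenvalues ∘ Tuple.sort hA.eigenvalues) i.rev

namespace Stmt9Aux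

open Polynomial Complex

/-! ### generalities -/

lemma real_smul_eq {n : ℕ} (r : ℝ) (A : Mat n) : r • A = (r : ℂ) • A := by
  ext i j
  simp [Matrix.smul_apply, Complex.real_smul]

/-- charpoly is invariant under unitary conjugation -/
lemma charpoly_conj {n : ℕ} (U A : Mat n) (h1 : U * star U = 1) :
    (U * A * star U).charpoly = A.charpoly := by
  classical
  set f : Matrix (Fin n) (Fin n) ℂ →+* Matrix (Fin n) (Fin n) (Polynomial ℂ)
    := (Polynomial.C : ℂ →+* Polynomial ℂ).mapMatrix with hf
  have h1' : f U * f (star U) = 1 := by rw [← _root_.map_mul f, h1, _root_.map_one f]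
  have hcomm : f U * Matrix.scalar (Fin n) (X : Polynomial ℂ)
      = Matrix.scalar (Fin n) (X : Polynomial ℂ) * f U :=
    ((Matrix.scalar_commute (X : Polynomial ℂ) (fun r => Commute.all _ r) (f U))).symm
  have key : f U * Matrix.charmatrix A * f (star U) = Matrix.charmatrix (U * A * star U) := by
    unfold Matrix.charmatrix
    calc f U * (Matrix.scalar (Fin n) (X : Polynomial ℂ) - (Polynomial.C : ℂ →+* Polynomial ℂ).mapMatrix A) * f (star U)
        = f U * Matrix.scalar (Fin n) (X : Polynomial ℂ) * f (star U)
            - f U * f A * f (star U) := by rw [mul_sub, sub_mul]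
      _ = Matrix.scalar (Fin n) (X : Polynomial ℂ) * f (U * star U)
            - f (U * A * star U) := by
            rw [hcomm, mul_assoc (Matrix.scalar (Fin n) (X : Polynomial ℂ)),
              ← _root_.map_mul f, ← _root_.map_mul f, ← _root_.map_mul f]
      _ = Matrix.scalar (Fin n) (X : Polynomial ℂ)
            - (Polynomial.C : ℂ →+* Polynomial ℂ).mapMatrix (U * A * star U) := by
            rw [h1, _root_.map_one f, mul_one]
  have hdet := congrArg Matrix.det key
  rw [Matrix.det_mul, Matrix.det_mul] at hdet
  have hdet2 : (f U).det * (f (star U)).det = 1 := by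
    rw [← Matrix.det_mul, h1', Matrix.det_one]
  calc (U * A * star U).charpoly = (Matrix.charmatrix (U * A * star U)).det := rfl
    _ = (f U).det * (Matrix.charmatrix A).det * (f (star U)).det := hdet.symm
    _ = ((f U).det * (f (star U)).det) * (Matrix.charmatrix A).det := by ring
    _ = (Matrix.charmatrix A).det := by rw [hdet2, one_mul]
    _ = A.charpoly := rfl

lemma roots_charpoly_diagonal {k : Type*} [Fintype k] [DecidableEq k] (v : k → ℂ) :
    (Matrix.diagonal v).charpoly.roots = Finset.univ.val.map v := by
  classical
  have h1 : Matrix.charmatrix (Matrix.diagonal v)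
      = Matrix.diagonal (fun i => (X : Polynomial ℂ) - Polynomial.C (v i)) := by
    ext i j
    rcases eq_or_ne i j with rfl | h
    · simp
    · simp [Matrix.charmatrix_apply_ne _ _ _ h, Matrix.diagonal_apply_ne _ h]
  rw [Matrix.charpoly, h1, Matrix.det_diagonal, Finset.prod_eq_multiset_prod]
  rw [show (Finset.univ.val.map fun i => (X : Polynomial ℂ) - Polynomial.C (v i))
      = ((Finset.univ.val.map v).map fun a => (X : Polynomial ℂ) - Polynomial.C a) by
    rw [Multiset.map_map]; rfl]
  exact Polynomial.roots_multiset_prod_X_sub_C _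

lemma roots_charpoly_hermitian {n : ℕ} {A : Mat n} (hA : A.IsHermitian) :
    A.charpoly.roots
      = (Finset.univ.val.map hA.eigenvalues).map (fun t : ℝ => (t : ℂ)) := by
  have hU : (hA.eigenvectorUnitary : Mat n) * star (hA.eigenvectorUnitary : Mat n) = 1 :=
    Matrix.mem_unitaryGroup_iff.mp hA.eigenvectorUnitary.2
  calc A.charpoly.roots
      = ((hA.eigenvectorUnitary : Mat n)
          * Matrix.diagonal (RCLike.ofReal ∘ hA.eigenvalues)
          * star (hA.eigenvectorUnitary : Mat n)).charpoly.roots := by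
        conv_lhs => rw [hA.spectral_theorem, Unitary.conjStarAlgAut_apply]
    _ = (Matrix.diagonal (RCLike.ofReal ∘ hA.eigenvalues)).charpoly.roots := by
        rw [charpoly_conj _ _ hU]
    _ = Finset.univ.val.map (RCLike.ofReal ∘ hA.eigenvalues) := roots_charpoly_diagonal _
    _ = (Finset.univ.val.map hA.eigenvalues).map (fun t : ℝ => (t : ℂ)) := by
        rw [Multiset.map_map]; rfl

lemma multiset_eigsDesc {n : ℕ} {A : Mat n} (hA : A.IsHermitian) :
    Finset.univ.val.map (eigsDesc hA) = Finset.univ.val.map hA.eigenvalues := by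
  have h : eigsDesc hA
      = hA.eigenvalues ∘ ⇑(Fin.revPerm.trans (Tuple.sort hA.eigenvalues)) := rfl
  rw [h, ← Multiset.map_map, Multiset.map_univ_val_equiv]

/-- exponential of a scalar multiple of a Hermitian matrix, via the spectral theorem -/
lemma exp_smul_hermitian {n : ℕ} {A : Mat n} (hA : A.IsHermitian) (t : ℂ) :
    NormedSpace.exp (t • A) =
      (hA.eigenvectorUnitary : Mat n)
        * Matrix.diagonal (fun k => Complex.exp (t * hA.eigenvalues k))
        * star (hA.eigenvectorUnitary : Mat n) := by
  have hU1 : (hA.eigenvectorUnitary : Mat n) * star (hA.eigenvectorUnitary : Mat n) = 1 :=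
    Matrix.mem_unitaryGroup_iff.mp hA.eigenvectorUnitary.2
  have hU2 : star (hA.eigenvectorUnitary : Mat n) * (hA.eigenvectorUnitary : Mat n) = 1 :=
    Matrix.mem_unitaryGroup_iff'.mp hA.eigenvectorUnitary.2
  have hD0 : Matrix.diagonal (fun k => t * (hA.eigenvalues k : ℂ))
      = t • Matrix.diagonal (RCLike.ofReal ∘ hA.eigenvalues) := by
    ext i j
    rcases eq_or_ne i j with rfl | h
    · simp only [Matrix.smul_apply, Matrix.diagonal_apply_eq, Function.comp_apply,
        smul_eq_mul]
      rfl
    · simp [Matrix.diagonal_apply_ne _ h]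
  have hdiag : t • A = (hA.eigenvectorUnitary : Mat n)
      * Matrix.diagonal (fun k => t * (hA.eigenvalues k : ℂ))
      * star (hA.eigenvectorUnitary : Mat n) := by
    rw [hD0, mul_smul_comm, smul_mul_assoc]
    conv_lhs => rw [hA.spectral_theorem, Unitary.conjStarAlgAut_apply]
  rw [hdiag]
  calc NormedSpace.exp ((hA.eigenvectorUnitary : Mat n)
        * Matrix.diagonal (fun k => t * (hA.eigenvalues k : ℂ))
        * star (hA.eigenvectorUnitary : Mat n))
      = (hA.eigenvectorUnitary : Mat n)
          * NormedSpace.exp (Matrix.diagonal (fun k => t * (hA.eigenvalues k : ℂ)))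
          * star (hA.eigenvectorUnitary : Mat n) :=
        Matrix.exp_units_conj
          ⟨(hA.eigenvectorUnitary : Mat n), star (hA.eigenvectorUnitary : Mat n), hU1, hU2⟩ _
    _ = (hA.eigenvectorUnitary : Mat n)
          * Matrix.diagonal (fun k => Complex.exp (t * hA.eigenvalues k))
          * star (hA.eigenvectorUnitary : Mat n) := by
        have hfn : (NormedSpace.exp fun k => t * (hA.eigenvalues k : ℂ))
            = fun k => Complex.exp (t * hA.eigenvalues k) := by
          funext k
          rw [Pi.coe_exp, ← Complex.exp_eq_exp_ℂ]
        rw [Matrix.exp_diagonal, hfn]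

lemma dot_conj {n : ℕ} (U : Mat n) (g : Fin n → ℂ) (v : Fin n → ℂ) :
    star v ⬝ᵥ ((U * Matrix.diagonal g * star U) *ᵥ v)
      = ∑ k, (Complex.normSq ((star U *ᵥ v) k) : ℂ) * g k := by
  set a := star U *ᵥ v with ha
  have h1 : (U * Matrix.diagonal g * star U) *ᵥ v = U *ᵥ (Matrix.diagonal g *ᵥ a) := by
    rw [ha, Matrix.mulVec_mulVec, Matrix.mulVec_mulVec, mul_assoc]
  have h2 : star a = star v ᵥ* U := by
    rw [ha, Matrix.star_mulVec, Matrix.star_eq_conjTranspose,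
      Matrix.conjTranspose_conjTranspose]
  rw [h1, Matrix.dotProduct_mulVec, ← h2]
  simp only [dotProduct, Matrix.mulVec_diagonal, Pi.star_apply]
  refine Finset.sum_congr rfl fun k _ => ?_
  rw [Complex.star_def, Complex.normSq_eq_conj_mul_self]
  ring


/-! ### pinned-index block machinery -/

variable {m : ℕ}

/-- equivalence `Fin m ⊕ Unit ≃ Fin (m+1)` sending `inr` to `i₀`. -/
def pinE (i₀ : Fin (m+1)) : (Fin m) ⊕ Unit ≃ Fin (m+1) :=
  ((Equiv.optionEquivSumPUnit.{0} (Fin m)).symm).trans (finSuccEquiv' i₀).symm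

@[simp] lemma pinE_inl (i₀ : Fin (m+1)) (j : Fin m) :
    pinE i₀ (Sum.inl j) = i₀.succAbove j := by
  simp [pinE]

@[simp] lemma pinE_inr (i₀ : Fin (m+1)) (u : Unit) : pinE i₀ (Sum.inr u) = i₀ := by
  simp [pinE]

lemma pinE_symm_succAbove (i₀ : Fin (m+1)) (i : Fin m) :
    (pinE i₀).symm (i₀.succAbove i) = Sum.inl i := by
  rw [Equiv.symm_apply_eq, pinE_inl]

lemma pinE_symm_self (i₀ : Fin (m+1)) :
    (pinE i₀).symm i₀ = Sum.inr Unit.unit := by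
  rw [Equiv.symm_apply_eq, pinE_inr]

/-- matrix with a pinned diagonal entry `c` at `i₀`, block `B` elsewhere. -/
def pin (i₀ : Fin (m+1)) (c : ℂ) (B : Mat m) : Mat (m+1) :=
  (Matrix.fromBlocks B 0 0 (c • (1 : Matrix Unit Unit ℂ))).submatrix
    (pinE i₀).symm (pinE i₀).symm

lemma pin_apply_ss (i₀ : Fin (m+1)) (c : ℂ) (B : Mat m) (i j : Fin m) :
    pin i₀ c B (i₀.succAbove i) (i₀.succAbove j) = B i j := by
  rw [pin, Matrix.submatrix_apply, pinE_symm_succAbove, pinE_symm_succAbove]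
  rfl

lemma pin_apply_pp (i₀ : Fin (m+1)) (c : ℂ) (B : Mat m) :
    pin i₀ c B i₀ i₀ = c := by
  rw [pin, Matrix.submatrix_apply, pinE_symm_self]
  simp [Matrix.one_apply]

lemma pin_apply_ps (i₀ : Fin (m+1)) (c : ℂ) (B : Mat m) (j : Fin m) :
    pin i₀ c B i₀ (i₀.succAbove j) = 0 := by
  rw [pin, Matrix.submatrix_apply, pinE_symm_self, pinE_symm_succAbove]
  rfl

lemma pin_apply_sp (i₀ : Fin (m+1)) (c : ℂ) (B : Mat m) (i : Fin m) :
    pin i₀ c B (i₀.succAbove i) i₀ = 0 := by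
  rw [pin, Matrix.submatrix_apply, pinE_symm_self, pinE_symm_succAbove]
  rfl

lemma eq_pin_of {i₀ : Fin (m+1)} {c : ℂ} {B : Mat m} {A : Mat (m+1)}
    (hpp : A i₀ i₀ = c)
    (hps : ∀ j, A i₀ (i₀.succAbove j) = 0)
    (hsp : ∀ i, A (i₀.succAbove i) i₀ = 0)
    (hss : ∀ i j, A (i₀.succAbove i) (i₀.succAbove j) = B i j) :
    A = pin i₀ c B := by
  ext i j
  obtain ⟨si, rfl⟩ := (pinE i₀).surjective i
  obtain ⟨sj, rfl⟩ := (pinE i₀).surjective j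
  rcases si with i' | u
  · rcases sj with j' | u'
    · simp only [pinE_inl]; rw [pin_apply_ss]; exact hss i' j'
    · simp only [pinE_inl, pinE_inr]; rw [pin_apply_sp]; exact hsp i'
  · rcases sj with j' | u'
    · simp only [pinE_inl, pinE_inr]; rw [pin_apply_ps]; exact hps j'
    · simp only [pinE_inr]; rw [pin_apply_pp]; exact hpp

lemma pin_mul (i₀ : Fin (m+1)) (a b : ℂ) (A B : Mat m) :
    pin i₀ a A * pin i₀ b B = pin i₀ (a * b) (A * B) := by
  unfold pin
  rw [Matrix.submatrix_mul_equiv]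
  rw [Matrix.fromBlocks_multiply]
  simp [smul_mul_assoc, mul_smul_comm, smul_smul, mul_comm]

lemma pin_smul (i₀ : Fin (m+1)) (t c : ℂ) (B : Mat m) :
    t • pin i₀ c B = pin i₀ (t * c) (t • B) := by
  unfold pin
  rw [show Matrix.fromBlocks (t • B) 0 0 ((t * c) • (1 : Matrix Unit Unit ℂ))
      = t • Matrix.fromBlocks B 0 0 (c • (1 : Matrix Unit Unit ℂ)) by
    simp [Matrix.fromBlocks_smul, smul_smul]]
  rw [Matrix.submatrix_smul]
  rfl

lemma pin_one (i₀ : Fin (m+1)) : pin i₀ 1 1 = 1 := by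
  unfold pin
  rw [one_smul, Matrix.fromBlocks_one, Matrix.submatrix_one_equiv]

lemma pin_inj {i₀ : Fin (m+1)} {a b : ℂ} {A B : Mat m} (h : pin i₀ a A = pin i₀ b B) :
    a = b ∧ A = B := by
  constructor
  · rw [← pin_apply_pp i₀ a A, h, pin_apply_pp]
  · ext i j; rw [← pin_apply_ss i₀ a A, h, pin_apply_ss]

lemma diagonal_pin (i₀ : Fin (m+1)) (d : Fin (m+1) → ℂ) :
    Matrix.diagonal d = pin i₀ (d i₀) (Matrix.diagonal (d ∘ i₀.succAbove)) := by
  refine eq_pin_of ?_ ?_ ?_ ?_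
  · simp
  · intro j; exact Matrix.diagonal_apply_ne _ (Fin.succAbove_ne i₀ j).symm
  · intro i; exact Matrix.diagonal_apply_ne _ (Fin.succAbove_ne i₀ i)
  · intro i j
    rcases eq_or_ne i j with rfl | h
    · simp
    · rw [Matrix.diagonal_apply_ne _ (by exact fun hc => h (i₀.succAbove_right_injective hc)),
        Matrix.diagonal_apply_ne _ h]

lemma roots_charpoly_pin (i₀ : Fin (m+1)) (c : ℂ) (B : Mat m) :
    (pin i₀ c B).charpoly.roots = c ::ₘ B.charpoly.roots := by
  have h1 : pin i₀ c B = Matrix.reindex (pinE i₀) (pinE i₀)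
      (Matrix.fromBlocks B 0 0 (c • (1 : Matrix Unit Unit ℂ))) := rfl
  have h2 : (c • (1 : Matrix Unit Unit ℂ)) = Matrix.diagonal (fun _ => c) := by
    ext i j
    cases i; cases j
    simp [Matrix.one_apply]
  rw [h1, Matrix.charpoly_reindex, Matrix.charpoly_fromBlocks_zero₁₂,
    Polynomial.roots_mul (((B.charpoly_monic).mul (Matrix.charpoly_monic _)).ne_zero),
    h2, roots_charpoly_diagonal]
  have h3 : (Finset.univ.val.map fun _ : Unit => c) = {c} := by
    simp [Finset.univ_unique]
  rw [h3, add_comm, Multiset.singleton_add]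

lemma univ_val_map_succAbove {α : Type*} (i₀ : Fin (m+1)) (d : Fin (m+1) → α) :
    Finset.univ.val.map d
      = d i₀ ::ₘ Finset.univ.val.map (fun j => d (i₀.succAbove j)) := by
  have h := Multiset.map_univ_val_equiv (pinE i₀)
  have h2 : (Finset.univ : Finset ((Fin m) ⊕ Unit)).val
      = Finset.univ.val.map Sum.inl + Finset.univ.val.map Sum.inr := by
    rw [← Finset.univ_disjSum_univ]; rfl
  calc Finset.univ.val.map d
      = (Multiset.map (⇑(pinE i₀)) Finset.univ.val).map d := by rw [h]
    _ = Finset.univ.val.map (d ∘ ⇑(pinE i₀)) := by rw [Multiset.map_map]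
    _ = (Finset.univ.val.map Sum.inl).map (d ∘ ⇑(pinE i₀))
          + (Finset.univ.val.map Sum.inr).map (d ∘ ⇑(pinE i₀)) := by
        rw [h2, Multiset.map_add]
    _ = Finset.univ.val.map (fun j => d (i₀.succAbove j))
          + ({d i₀} : Multiset α) := by
        have e1 : Finset.univ.val.map ((d ∘ ⇑(pinE i₀)) ∘ Sum.inl)
            = Finset.univ.val.map (fun j => d (i₀.succAbove j)) :=
          Multiset.map_congr rfl (fun x _ => by simp)
        have e2 : Finset.univ.val.map ((d ∘ ⇑(pinE i₀)) ∘ Sum.inr) = {d i₀} := by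
          simp [Finset.univ_unique]
        rw [Multiset.map_map, Multiset.map_map, e1, e2]
    _ = d i₀ ::ₘ Finset.univ.val.map (fun j => d (i₀.succAbove j)) := by
        rw [add_comm, Multiset.singleton_add]

lemma hermitian_eigcol_pin {A : Mat (m+1)} (hA : A.IsHermitian) {i₀ : Fin (m+1)} {c : ℂ}
    (h : A *ᵥ Pi.single i₀ 1 = c • (Pi.single i₀ 1 : Fin (m+1) → ℂ)) :
    A = pin i₀ c (A.submatrix i₀.succAbove i₀.succAbove) := by
  have hcol : ∀ i, A i i₀ = (c • (Pi.single i₀ 1 : Fin (m+1) → ℂ)) i := by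
    intro i; rw [← h]; simp [Matrix.mulVec_single]
  refine eq_pin_of ?_ ?_ ?_ ?_
  · have := hcol i₀; simpa using this
  · intro j
    have h1 : A i₀ (i₀.succAbove j) = star (A (i₀.succAbove j) i₀) := by
      conv_lhs => rw [← hA]
      rfl
    have h2 := hcol (i₀.succAbove j)
    simp only [Pi.smul_apply, Pi.single_eq_of_ne (Fin.succAbove_ne i₀ j), smul_zero] at h2
    rw [h1, h2, star_zero]
  · intro i
    have h2 := hcol (i₀.succAbove i)
    simpa only [Pi.smul_apply, Pi.single_eq_of_ne (Fin.succAbove_ne i₀ i), smul_zero] using h2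
  · intro i j; rfl

/-- decomposition `t • A = U * diag (t * eig) * Uᴴ` for Hermitian `A` -/
lemma smul_hermitian_decomp {k : ℕ} {A : Mat k} (hA : A.IsHermitian) (t : ℂ) :
    t • A = (hA.eigenvectorUnitary : Mat k)
      * Matrix.diagonal (fun j => t * (hA.eigenvalues j : ℂ))
      * star (hA.eigenvectorUnitary : Mat k) := by
  have hD0 : Matrix.diagonal (fun j => t * (hA.eigenvalues j : ℂ))
      = t • Matrix.diagonal (RCLike.ofReal ∘ hA.eigenvalues) := by
    ext i j
    rcases eq_or_ne i j with rfl | h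
    · simp only [Matrix.smul_apply, Matrix.diagonal_apply_eq, Function.comp_apply,
        smul_eq_mul]
      rfl
    · simp [Matrix.diagonal_apply_ne _ h]
  rw [hD0, mul_smul_comm, smul_mul_assoc]
  conv_lhs => rw [hA.spectral_theorem, Unitary.conjStarAlgAut_apply]

lemma exp_pin_diagonal (i₀ : Fin (m+1)) (c : ℂ) (w : Fin m → ℂ) :
    NormedSpace.exp (pin i₀ c (Matrix.diagonal w))
      = pin i₀ (Complex.exp c) (Matrix.diagonal (fun k => Complex.exp (w k))) := by
  have hd : ∀ (a : ℂ) (u : Fin m → ℂ),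
      Matrix.diagonal (fun j => Sum.elim u (fun _ => a) ((pinE i₀).symm j))
        = pin i₀ a (Matrix.diagonal u) := by
    intro a u
    refine eq_pin_of ?_ ?_ ?_ ?_
    · rw [Matrix.diagonal_apply_eq, pinE_symm_self]
      rfl
    · intro j; exact Matrix.diagonal_apply_ne _ (Fin.succAbove_ne i₀ j).symm
    · intro i; exact Matrix.diagonal_apply_ne _ (Fin.succAbove_ne i₀ i)
    · intro i j
      rcases eq_or_ne i j with rfl | h
      · rw [Matrix.diagonal_apply_eq, Matrix.diagonal_apply_eq, pinE_symm_succAbove]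
        rfl
      · rw [Matrix.diagonal_apply_ne _ (by exact fun hc => h (i₀.succAbove_right_injective hc)),
          Matrix.diagonal_apply_ne _ h]
  have hfn : (NormedSpace.exp fun j => Sum.elim w (fun _ => c) ((pinE i₀).symm j))
      = fun j => Sum.elim (fun k => Complex.exp (w k)) (fun _ => Complex.exp c)
          ((pinE i₀).symm j) := by
    funext j
    rw [Pi.coe_exp, ← Complex.exp_eq_exp_ℂ]
    rcases hsj : (pinE i₀).symm j with j' | u <;> simp [hsj]
  rw [← hd c w, Matrix.exp_diagonal, hfn, hd (Complex.exp c) (fun k => Complex.exp (w k))]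

lemma exp_I_pin {B : Mat m} (hB : B.IsHermitian) (i₀ : Fin (m+1)) (c : ℂ) :
    NormedSpace.exp (Complex.I • pin i₀ c B)
      = pin i₀ (Complex.exp (Complex.I * c)) (NormedSpace.exp (Complex.I • B)) := by
  have hW1 : (hB.eigenvectorUnitary : Mat m) * star (hB.eigenvectorUnitary : Mat m) = 1 :=
    Matrix.mem_unitaryGroup_iff.mp hB.eigenvectorUnitary.2
  have hW2 : star (hB.eigenvectorUnitary : Mat m) * (hB.eigenvectorUnitary : Mat m) = 1 :=
    Matrix.mem_unitaryGroup_iff'.mp hB.eigenvectorUnitary.2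
  rw [exp_smul_hermitian hB Complex.I, pin_smul, smul_hermitian_decomp hB Complex.I]
  have hsplit : pin i₀ (Complex.I * c)
      ((hB.eigenvectorUnitary : Mat m)
        * Matrix.diagonal (fun j => Complex.I * (hB.eigenvalues j : ℂ))
        * star (hB.eigenvectorUnitary : Mat m))
      = pin i₀ 1 (hB.eigenvectorUnitary : Mat m)
        * pin i₀ (Complex.I * c) (Matrix.diagonal (fun j => Complex.I * (hB.eigenvalues j : ℂ)))
        * pin i₀ 1 (star (hB.eigenvectorUnitary : Mat m)) := by
    rw [pin_mul, pin_mul, one_mul, mul_one]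
  have hu1 : pin i₀ 1 (hB.eigenvectorUnitary : Mat m)
      * pin i₀ 1 (star (hB.eigenvectorUnitary : Mat m)) = 1 := by
    rw [pin_mul, one_mul, hW1, pin_one]
  have hu2 : pin i₀ 1 (star (hB.eigenvectorUnitary : Mat m))
      * pin i₀ 1 (hB.eigenvectorUnitary : Mat m) = 1 := by
    rw [pin_mul, one_mul, hW2, pin_one]
  rw [hsplit]
  calc NormedSpace.exp (pin i₀ 1 (hB.eigenvectorUnitary : Mat m)
        * pin i₀ (Complex.I * c) (Matrix.diagonal (fun j => Complex.I * (hB.eigenvalues j : ℂ)))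
        * pin i₀ 1 (star (hB.eigenvectorUnitary : Mat m)))
      = pin i₀ 1 (hB.eigenvectorUnitary : Mat m)
        * NormedSpace.exp
            (pin i₀ (Complex.I * c) (Matrix.diagonal (fun j => Complex.I * (hB.eigenvalues j : ℂ))))
        * pin i₀ 1 (star (hB.eigenvectorUnitary : Mat m)) :=
      Matrix.exp_units_conj
        ⟨pin i₀ 1 (hB.eigenvectorUnitary : Mat m),
          pin i₀ 1 (star (hB.eigenvectorUnitary : Mat m)), hu1, hu2⟩ _
    _ = pin i₀ (Complex.exp (Complex.I * c))
          ((hB.eigenvectorUnitary : Mat m)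
            * Matrix.diagonal (fun k => Complex.exp (Complex.I * hB.eigenvalues k))
            * star (hB.eigenvectorUnitary : Mat m)) := by
        rw [exp_pin_diagonal, pin_mul, pin_mul, one_mul, mul_one]


/-! ### the chord lemmas -/

lemma weights_sum {n : ℕ} (U : Mat n) (hU1 : U * star U = 1) (v : Fin n → ℂ)
    (hv : star v ⬝ᵥ v = 1) :
    ∑ k, Complex.normSq ((star U *ᵥ v) k) = 1 := by
  have h := dot_conj U (fun _ => 1) v
  rw [Matrix.diagonal_one, mul_one, hU1, Matrix.one_mulVec, hv] at h
  simp only [mul_one] at h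
  exact_mod_cast h.symm

lemma exp_neg_mul_exp {n : ℕ} (X : Mat n) :
    NormedSpace.exp ((-Complex.I) • X) * NormedSpace.exp (Complex.I • X) = 1 := by
  rw [← Matrix.exp_add_of_commute]
  · rw [← add_smul, neg_add_cancel, zero_smul, NormedSpace.exp_zero]
  · exact ((Commute.refl X).smul_left _).smul_right _

/-- termwise imaginary-part formula -/
lemma im_term (cR s θ : ℝ) :
    ((Complex.exp (-(cR:ℂ) * Complex.I) - 1)
      * ((s:ℂ) * Complex.exp ((θ:ℂ) * Complex.I))).im
      = s * (Real.sin (θ - cR) - Real.sin θ) := by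
  rw [show (Complex.exp (-(cR:ℂ) * Complex.I) - 1)
        * ((s:ℂ) * Complex.exp ((θ:ℂ) * Complex.I))
      = (s:ℂ) * ((Complex.exp (-(cR:ℂ) * Complex.I)) * Complex.exp ((θ:ℂ) * Complex.I)
        - Complex.exp ((θ:ℂ) * Complex.I)) from by ring]
  rw [← Complex.exp_add,
    show -(cR:ℂ) * Complex.I + (θ:ℂ) * Complex.I = ((θ - cR : ℝ):ℂ) * Complex.I from by
      push_cast; ring]
  rw [Complex.im_ofReal_mul, Complex.sub_im, Complex.exp_ofReal_mul_I_im,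
    Complex.exp_ofReal_mul_I_im]

lemma sin_diff_eq (cR θ : ℝ) :
    Real.sin (θ - cR) - Real.sin θ
      = (-(2 * Real.sin (cR/2))) * Real.cos (θ - cR/2) := by
  rw [Real.sin_sub_sin,
    show (θ - cR - θ)/2 = -(cR/2) by ring,
    show (θ - cR + θ)/2 = θ - cR/2 by ring, Real.sin_neg]
  ring

lemma cos_le_lemma {c x : ℝ} (hc0 : 0 < c) (hcpi : c < Real.pi)
    (h1 : c ≤ x) (h2 : x ≤ 2*Real.pi - c) :
    Real.cos x ≤ Real.cos c := by
  rcases le_or_gt x Real.pi with hx | hx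
  · exact Real.cos_le_cos_of_nonneg_of_le_pi hc0.le hx h1
  · rw [← Real.cos_two_pi_sub]
    exact Real.cos_le_cos_of_nonneg_of_le_pi hc0.le (by linarith) (by linarith)

lemma cos_ge_lemma {c x : ℝ} (hcpi : c ≤ Real.pi) (h : |x| ≤ c) :
    Real.cos c ≤ Real.cos x := by
  rw [← Real.cos_abs x]
  exact Real.cos_le_cos_of_nonneg_of_le_pi (abs_nonneg _) hcpi h

lemma cos_eq_lemma {c x : ℝ} (hc0 : 0 < c) (hcpi : c < Real.pi) (h : |x| ≤ c)
    (heq : Real.cos x = Real.cos c) : x = c ∨ x = -c := by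
  have h1 : Real.cos |x| = Real.cos c := by rw [Real.cos_abs]; exact heq
  have h2 : |x| = c := Real.injOn_cos ⟨abs_nonneg _, le_trans h hcpi.le⟩
    ⟨hc0.le, hcpi.le⟩ h1
  rcases abs_eq hc0.le |>.mp h2 with h3 | h3
  · exact Or.inl h3
  · exact Or.inr h3

lemma chord {n : ℕ} {X Y : Mat n} (hX : X.IsHermitian) (hY : Y.IsHermitian)
    (r lam : ℝ) (hr0 : 0 < r) (hr1 : r < 1)
    (hmu : ∀ k, r * (lam - 2*Real.pi) < hX.eigenvalues k
      ∧ hX.eigenvalues k ≤ r * lam)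
    (hnu : ∀ k, (1-r) * (lam - 2*Real.pi) < hY.eigenvalues k
      ∧ hY.eigenvalues k ≤ (1-r) * lam)
    (v : Fin n → ℂ) (hv : star v ⬝ᵥ v = 1)
    (hveq : (NormedSpace.exp (Complex.I • X) * NormedSpace.exp (Complex.I • Y)) *ᵥ v
      = Complex.exp (Complex.I * lam) • v) :
    X *ᵥ v = ((r * lam : ℝ) : ℂ) • v ∧ Y *ᵥ v = (((1-r) * lam : ℝ) : ℂ) • v := by
  classical
  have hpi := Real.pi_pos
  set U := (hX.eigenvectorUnitary : Mat n) with hUdef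
  set V := (hY.eigenvectorUnitary : Mat n) with hVdef
  set μ := hX.eigenvalues with hμdef
  set ν := hY.eigenvalues with hνdef
  have hU1 : U * star U = 1 := Matrix.mem_unitaryGroup_iff.mp hX.eigenvectorUnitary.2
  have hV1 : V * star V = 1 := Matrix.mem_unitaryGroup_iff.mp hY.eigenvectorUnitary.2
  set a := star U *ᵥ v with hadef
  set b := star V *ᵥ v with hbdef
  set p := fun k => Complex.normSq (a k) with hpdef
  set q := fun k => Complex.normSq (b k) with hqdef
  have hpsum : ∑ k, p k = 1 := weights_sum U hU1 v hv
  have hqsum : ∑ k, q k = 1 := weights_sum V hV1 v hv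
  have hppos : ∀ k, 0 ≤ p k := fun k => Complex.normSq_nonneg _
  have hqpos : ∀ k, 0 ≤ q k := fun k => Complex.normSq_nonneg _
  -- the two scalar quantities
  have hsY : star v ⬝ᵥ (NormedSpace.exp (Complex.I • Y) *ᵥ v)
      = ∑ k, (q k : ℂ) * Complex.exp (Complex.I * ν k) := by
    rw [exp_smul_hermitian hY Complex.I]
    exact dot_conj V (fun k => Complex.exp (Complex.I * ν k)) v
  have htX : star v ⬝ᵥ (NormedSpace.exp ((-Complex.I) • X) *ᵥ v)
      = ∑ k, (p k : ℂ) * Complex.exp (-Complex.I * μ k) := by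
    rw [exp_smul_hermitian hX (-Complex.I)]
    exact dot_conj U (fun k => Complex.exp (-Complex.I * μ k)) v
  have hYv : NormedSpace.exp (Complex.I • Y) *ᵥ v
      = Complex.exp (Complex.I * lam) • (NormedSpace.exp ((-Complex.I) • X) *ᵥ v) := by
    calc NormedSpace.exp (Complex.I • Y) *ᵥ v
        = (NormedSpace.exp ((-Complex.I) • X) * NormedSpace.exp (Complex.I • X)
            * NormedSpace.exp (Complex.I • Y)) *ᵥ v := by
          rw [exp_neg_mul_exp, one_mul]
      _ = NormedSpace.exp ((-Complex.I) • X) *ᵥ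
            ((NormedSpace.exp (Complex.I • X) * NormedSpace.exp (Complex.I • Y)) *ᵥ v) := by
          rw [Matrix.mulVec_mulVec, mul_assoc]
      _ = NormedSpace.exp ((-Complex.I) • X) *ᵥ (Complex.exp (Complex.I * lam) • v) := by
          rw [hveq]
      _ = Complex.exp (Complex.I * lam) • (NormedSpace.exp ((-Complex.I) • X) *ᵥ v) :=
          Matrix.mulVec_smul _ _ _
  have hkey : (∑ k, (q k : ℂ) * Complex.exp (Complex.I * ν k))
      = Complex.exp (Complex.I * lam) * ∑ k, (p k : ℂ) * Complex.exp (-Complex.I * μ k) := by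
    rw [← hsY, ← htX, hYv, dotProduct_smul, smul_eq_mul]
  -- angle form of the identity
  have hE : (∑ k, (q k : ℂ) * Complex.exp (((ν k - (1-r)*lam : ℝ):ℂ) * Complex.I))
      = ∑ k, (p k : ℂ) * Complex.exp (((r*lam - μ k : ℝ):ℂ) * Complex.I) := by
    have e1 : ∀ k, (q k : ℂ) * Complex.exp (((ν k - (1-r)*lam : ℝ):ℂ) * Complex.I)
        = Complex.exp (-((((1-r)*lam : ℝ)):ℂ) * Complex.I)
          * ((q k : ℂ) * Complex.exp (Complex.I * ν k)) := by
      intro k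
      rw [show (((ν k - (1-r)*lam : ℝ):ℂ) * Complex.I)
          = (-((((1-r)*lam : ℝ)):ℂ) * Complex.I) + Complex.I * ν k from by push_cast; ring,
        Complex.exp_add]
      ring
    have e2 : ∀ k, (p k : ℂ) * Complex.exp (((r*lam - μ k : ℝ):ℂ) * Complex.I)
        = Complex.exp (-((((1-r)*lam : ℝ)):ℂ) * Complex.I)
          * (Complex.exp (Complex.I * lam) * ((p k : ℂ) * Complex.exp (-Complex.I * μ k))) := by
      intro k
      rw [show (((r*lam - μ k : ℝ):ℂ) * Complex.I)
          = (-((((1-r)*lam : ℝ)):ℂ) * Complex.I) + (Complex.I * lam + -Complex.I * μ k) from by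
            push_cast; ring,
        Complex.exp_add, Complex.exp_add]
      ring
    calc (∑ k, (q k : ℂ) * Complex.exp (((ν k - (1-r)*lam : ℝ):ℂ) * Complex.I))
        = ∑ k, Complex.exp (-((((1-r)*lam : ℝ)):ℂ) * Complex.I)
            * ((q k : ℂ) * Complex.exp (Complex.I * ν k)) :=
          Finset.sum_congr rfl (fun k _ => e1 k)
      _ = Complex.exp (-((((1-r)*lam : ℝ)):ℂ) * Complex.I)
            * ∑ k, (q k : ℂ) * Complex.exp (Complex.I * ν k) := by
          rw [Finset.mul_sum]
      _ = Complex.exp (-((((1-r)*lam : ℝ)):ℂ) * Complex.I)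
            * (Complex.exp (Complex.I * lam)
              * ∑ k, (p k : ℂ) * Complex.exp (-Complex.I * μ k)) := by rw [hkey]
      _ = ∑ k, Complex.exp (-((((1-r)*lam : ℝ)):ℂ) * Complex.I)
            * (Complex.exp (Complex.I * lam)
              * ((p k : ℂ) * Complex.exp (-Complex.I * μ k))) := by
          rw [Finset.mul_sum, Finset.mul_sum]
      _ = ∑ k, (p k : ℂ) * Complex.exp (((r*lam - μ k : ℝ):ℂ) * Complex.I) :=
          Finset.sum_congr rfl (fun k _ => (e2 k).symm)
  set cR := 2 * Real.pi * r with hcRdef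
  have hc0 : 0 < cR/2 := by rw [hcRdef]; positivity
  have hcpi : cR/2 < Real.pi := by
    rw [hcRdef]
    nlinarith
  -- imaginary parts
  have hIm : (∑ k, q k * (Real.sin ((ν k - (1-r)*lam) - cR)
        - Real.sin (ν k - (1-r)*lam)))
      = ∑ k, p k * (Real.sin ((r*lam - μ k) - cR) - Real.sin (r*lam - μ k)) := by
    have h1 := congrArg (fun z => ((Complex.exp (-(cR:ℂ) * Complex.I) - 1) * z).im) hE
    simp only [Finset.mul_sum, Complex.im_sum] at h1
    calc (∑ k, q k * (Real.sin ((ν k - (1-r)*lam) - cR) - Real.sin (ν k - (1-r)*lam)))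
        = ∑ k, ((Complex.exp (-(cR:ℂ) * Complex.I) - 1)
            * ((q k : ℂ) * Complex.exp (((ν k - (1-r)*lam : ℝ):ℂ) * Complex.I))).im :=
          Finset.sum_congr rfl (fun k _ => (im_term cR (q k) _).symm)
      _ = ∑ k, ((Complex.exp (-(cR:ℂ) * Complex.I) - 1)
            * ((p k : ℂ) * Complex.exp (((r*lam - μ k : ℝ):ℂ) * Complex.I))).im := h1
      _ = ∑ k, p k * (Real.sin ((r*lam - μ k) - cR) - Real.sin (r*lam - μ k)) :=
          Finset.sum_congr rfl (fun k _ => im_term cR (p k) _)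
  -- cosine form
  have hcos : (∑ k, q k * Real.cos ((ν k - (1-r)*lam) - cR/2))
      = ∑ k, p k * Real.cos ((r*lam - μ k) - cR/2) := by
    have hne : (-(2 * Real.sin (cR/2))) ≠ 0 := by
      have := Real.sin_pos_of_pos_of_lt_pi hc0 hcpi
      intro hc; nlinarith
    apply mul_left_cancel₀ hne
    rw [Finset.mul_sum, Finset.mul_sum]
    calc (∑ k, (-(2 * Real.sin (cR/2))) * (q k * Real.cos ((ν k - (1-r)*lam) - cR/2)))
        = ∑ k, q k * (Real.sin ((ν k - (1-r)*lam) - cR) - Real.sin (ν k - (1-r)*lam)) := by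
          refine Finset.sum_congr rfl (fun k _ => ?_)
          rw [sin_diff_eq]; ring
      _ = ∑ k, p k * (Real.sin ((r*lam - μ k) - cR) - Real.sin (r*lam - μ k)) := hIm
      _ = ∑ k, (-(2 * Real.sin (cR/2))) * (p k * Real.cos ((r*lam - μ k) - cR/2)) := by
          refine Finset.sum_congr rfl (fun k _ => ?_)
          rw [sin_diff_eq]; ring
  -- bounds
  have hαmem : ∀ k, 0 ≤ r*lam - μ k ∧ r*lam - μ k < cR := by
    intro k
    have h1 := (hmu k).1
    have h2 := (hmu k).2
    have h3 : r*(lam - 2*Real.pi) = r*lam - cR := by rw [hcRdef]; ring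
    constructor
    · linarith
    · rw [← h3] at *; linarith
  have hβmem : ∀ k, cR - 2*Real.pi < ν k - (1-r)*lam ∧ ν k - (1-r)*lam ≤ 0 := by
    intro k
    have h1 := (hnu k).1
    have h2 := (hnu k).2
    have h3 : (1-r)*(lam - 2*Real.pi) = (1-r)*lam + (cR - 2*Real.pi) := by
      rw [hcRdef]; ring
    constructor
    · rw [h3] at h1; linarith
    · linarith
  have hAcos : ∀ k, Real.cos (cR/2) ≤ Real.cos ((r*lam - μ k) - cR/2) := by
    intro k
    refine cos_ge_lemma hcpi.le (abs_le.mpr ⟨?_, ?_⟩)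
    · linarith [(hαmem k).1]
    · linarith [(hαmem k).2]
  have hBcos : ∀ k, Real.cos ((ν k - (1-r)*lam) - cR/2) ≤ Real.cos (cR/2) := by
    intro k
    have h1 : Real.cos ((ν k - (1-r)*lam) - cR/2)
        = Real.cos (cR/2 - (ν k - (1-r)*lam)) := by
      rw [← Real.cos_neg]; ring_nf
    rw [h1]
    refine cos_le_lemma hc0 hcpi ?_ ?_
    · linarith [(hβmem k).2]
    · linarith [(hβmem k).1]
  -- squeeze
  have hsum_ge : Real.cos (cR/2) ≤ ∑ k, p k * Real.cos ((r*lam - μ k) - cR/2) := by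
    calc Real.cos (cR/2) = ∑ k, p k * Real.cos (cR/2) := by
          rw [← Finset.sum_mul, hpsum, one_mul]
      _ ≤ ∑ k, p k * Real.cos ((r*lam - μ k) - cR/2) :=
        Finset.sum_le_sum (fun k _ => mul_le_mul_of_nonneg_left (hAcos k) (hppos k))
  have hsum_le : (∑ k, q k * Real.cos ((ν k - (1-r)*lam) - cR/2)) ≤ Real.cos (cR/2) := by
    calc (∑ k, q k * Real.cos ((ν k - (1-r)*lam) - cR/2))
        ≤ ∑ k, q k * Real.cos (cR/2) :=
          Finset.sum_le_sum (fun k _ => mul_le_mul_of_nonneg_left (hBcos k) (hqpos k))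
      _ = Real.cos (cR/2) := by rw [← Finset.sum_mul, hqsum, one_mul]
  have hSeqp : (∑ k, p k * Real.cos ((r*lam - μ k) - cR/2)) = Real.cos (cR/2) :=
    le_antisymm (by rw [← hcos]; exact hsum_le) hsum_ge
  have hSeqq : (∑ k, q k * Real.cos ((ν k - (1-r)*lam) - cR/2)) = Real.cos (cR/2) := by
    rw [hcos]; exact hSeqp
  -- termwise equalities
  have hterm_p : ∀ k ∈ Finset.univ,
      p k * (Real.cos ((r*lam - μ k) - cR/2) - Real.cos (cR/2)) = 0 := by
    rw [← Finset.sum_eq_zero_iff_of_nonneg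
      (fun k _ => mul_nonneg (hppos k) (sub_nonneg.mpr (hAcos k)))]
    simp only [mul_sub]
    rw [Finset.sum_sub_distrib, hSeqp, ← Finset.sum_mul, hpsum, one_mul, sub_self]
  have hterm_q : ∀ k ∈ Finset.univ,
      q k * (Real.cos (cR/2) - Real.cos ((ν k - (1-r)*lam) - cR/2)) = 0 := by
    rw [← Finset.sum_eq_zero_iff_of_nonneg
      (fun k _ => mul_nonneg (hqpos k) (sub_nonneg.mpr (hBcos k)))]
    simp only [mul_sub]
    rw [Finset.sum_sub_distrib, hSeqq, ← Finset.sum_mul, hqsum, one_mul, sub_self]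
  -- eigen-structure
  have hXeig : ∀ k, a k = 0 ∨ μ k = r * lam := by
    intro k
    rcases mul_eq_zero.mp (hterm_p k (Finset.mem_univ k)) with hp | hc
    · exact Or.inl (Complex.normSq_eq_zero.mp hp)
    · right
      have hcc : Real.cos ((r*lam - μ k) - cR/2) = Real.cos (cR/2) := by
        have := sub_eq_zero.mp hc; linarith [this]
      rcases cos_eq_lemma hc0 hcpi
          (abs_le.mpr ⟨by linarith [(hαmem k).1], by linarith [(hαmem k).2]⟩) hcc with h | h
      · exfalso; have := (hαmem k).2; linarith
      · linarith
  have hYeig : ∀ k, b k = 0 ∨ ν k = (1-r) * lam := by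
    intro k
    rcases mul_eq_zero.mp (hterm_q k (Finset.mem_univ k)) with hq | hc
    · exact Or.inl (Complex.normSq_eq_zero.mp hq)
    · right
      have hcc0 := sub_eq_zero.mp hc
      have hcc : Real.cos (cR/2 - (ν k - (1-r)*lam)) = Real.cos (cR/2) := by
        rw [← Real.cos_neg (cR/2 - (ν k - (1-r)*lam)),
          show -(cR/2 - (ν k - (1-r)*lam)) = (ν k - (1-r)*lam) - cR/2 by ring]
        exact hcc0.symm
      have hx1 : cR/2 ≤ cR/2 - (ν k - (1-r)*lam) := by linarith [(hβmem k).2]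
      have hx2 : cR/2 - (ν k - (1-r)*lam) < 2*Real.pi - cR/2 := by linarith [(hβmem k).1]
      rcases le_or_gt (cR/2 - (ν k - (1-r)*lam)) Real.pi with hxle | hxgt
      · have h2 : cR/2 - (ν k - (1-r)*lam) = cR/2 :=
          Real.injOn_cos ⟨by linarith, hxle⟩ ⟨hc0.le, hcpi.le⟩ hcc
        linarith
      · have h3 : Real.cos (2*Real.pi - (cR/2 - (ν k - (1-r)*lam))) = Real.cos (cR/2) := by
          rw [Real.cos_two_pi_sub]; exact hcc
        have h4 : 2*Real.pi - (cR/2 - (ν k - (1-r)*lam)) = cR/2 :=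
          Real.injOn_cos ⟨by linarith, by linarith⟩ ⟨hc0.le, hcpi.le⟩ h3
        exfalso; linarith
  -- assemble
  have hUa : U *ᵥ a = v := by
    rw [hadef, Matrix.mulVec_mulVec, hU1, Matrix.one_mulVec]
  have hVb : V *ᵥ b = v := by
    rw [hbdef, Matrix.mulVec_mulVec, hV1, Matrix.one_mulVec]
  constructor
  · have hXdec : X *ᵥ v = U *ᵥ (Matrix.diagonal (RCLike.ofReal ∘ μ) *ᵥ a) := by
      conv_lhs => rw [hX.spectral_theorem, Unitary.conjStarAlgAut_apply]
      rw [← hUdef, ← hμdef, hadef, Matrix.mulVec_mulVec, Matrix.mulVec_mulVec]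
    have hDa : Matrix.diagonal (RCLike.ofReal ∘ μ) *ᵥ a = ((r*lam : ℝ) : ℂ) • a := by
      funext k
      rw [Matrix.mulVec_diagonal]
      rcases hXeig k with h | h
      · simp [h]
      · simp only [Function.comp_apply, h, Pi.smul_apply, smul_eq_mul]
        rfl
    rw [hXdec, hDa, Matrix.mulVec_smul, hUa]
  · have hYdec : Y *ᵥ v = V *ᵥ (Matrix.diagonal (RCLike.ofReal ∘ ν) *ᵥ b) := by
      conv_lhs => rw [hY.spectral_theorem, Unitary.conjStarAlgAut_apply]
      rw [← hVdef, ← hνdef, hbdef, Matrix.mulVec_mulVec, Matrix.mulVec_mulVec]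
    have hDb : Matrix.diagonal (RCLike.ofReal ∘ ν) *ᵥ b = (((1-r)*lam : ℝ) : ℂ) • b := by
      funext k
      rw [Matrix.mulVec_diagonal]
      rcases hYeig k with h | h
      · simp [h]
      · simp only [Function.comp_apply, h, Pi.smul_apply, smul_eq_mul]
        rfl
    rw [hYdec, hDb, Matrix.mulVec_smul, hVb]


lemma chordOne {n : ℕ} {A : Mat n} (hA : A.IsHermitian) (lam : ℝ)
    (hlam₁ : -Real.pi < lam) (hlam₂ : lam < Real.pi)
    (hmu : ∀ k, -Real.pi < hA.eigenvalues k ∧ hA.eigenvalues k ≤ lam)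
    (v : Fin n → ℂ) (hv : star v ⬝ᵥ v = 1)
    (hveq : NormedSpace.exp (Complex.I • A) *ᵥ v = Complex.exp (Complex.I * lam) • v) :
    A *ᵥ v = ((lam : ℝ) : ℂ) • v := by
  classical
  have hpi := Real.pi_pos
  set U := (hA.eigenvectorUnitary : Mat n) with hUdef
  set μ := hA.eigenvalues with hμdef
  have hU1 : U * star U = 1 := Matrix.mem_unitaryGroup_iff.mp hA.eigenvectorUnitary.2
  set a := star U *ᵥ v with hadef
  set p := fun k => Complex.normSq (a k) with hpdef
  have hpsum : ∑ k, p k = 1 := weights_sum U hU1 v hv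
  have hppos : ∀ k, 0 ≤ p k := fun k => Complex.normSq_nonneg _
  have htA : (∑ k, (p k : ℂ) * Complex.exp (Complex.I * μ k))
      = Complex.exp (Complex.I * lam) := by
    have h1 : star v ⬝ᵥ (NormedSpace.exp (Complex.I • A) *ᵥ v)
        = ∑ k, (p k : ℂ) * Complex.exp (Complex.I * μ k) := by
      rw [exp_smul_hermitian hA Complex.I]
      exact dot_conj U (fun k => Complex.exp (Complex.I * μ k)) v
    rw [← h1, hveq, dotProduct_smul, hv, smul_eq_mul, mul_one]
  have hE : (∑ k, (p k : ℂ) * Complex.exp (((μ k - (lam - Real.pi)/2 : ℝ):ℂ) * Complex.I))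
      = Complex.exp ((((lam + Real.pi)/2 : ℝ):ℂ) * Complex.I) := by
    have e1 : ∀ k, (p k : ℂ) * Complex.exp (((μ k - (lam - Real.pi)/2 : ℝ):ℂ) * Complex.I)
        = Complex.exp (-((((lam - Real.pi)/2 : ℝ)):ℂ) * Complex.I)
          * ((p k : ℂ) * Complex.exp (Complex.I * μ k)) := by
      intro k
      rw [show (((μ k - (lam - Real.pi)/2 : ℝ):ℂ) * Complex.I)
          = (-((((lam - Real.pi)/2 : ℝ)):ℂ) * Complex.I) + Complex.I * μ k from by
            push_cast; ring,
        Complex.exp_add]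
      ring
    calc (∑ k, (p k : ℂ) * Complex.exp (((μ k - (lam - Real.pi)/2 : ℝ):ℂ) * Complex.I))
        = ∑ k, Complex.exp (-((((lam - Real.pi)/2 : ℝ)):ℂ) * Complex.I)
            * ((p k : ℂ) * Complex.exp (Complex.I * μ k)) :=
          Finset.sum_congr rfl (fun k _ => e1 k)
      _ = Complex.exp (-((((lam - Real.pi)/2 : ℝ)):ℂ) * Complex.I)
            * ∑ k, (p k : ℂ) * Complex.exp (Complex.I * μ k) := by rw [Finset.mul_sum]
      _ = Complex.exp (-((((lam - Real.pi)/2 : ℝ)):ℂ) * Complex.I)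
            * Complex.exp (Complex.I * lam) := by rw [htA]
      _ = Complex.exp ((((lam + Real.pi)/2 : ℝ):ℂ) * Complex.I) := by
          rw [← Complex.exp_add,
            show (-((((lam - Real.pi)/2 : ℝ)):ℂ) * Complex.I) + Complex.I * lam
              = (((lam + Real.pi)/2 : ℝ):ℂ) * Complex.I from by push_cast; ring]
  have hRe : (∑ k, p k * Real.cos (μ k - (lam - Real.pi)/2))
      = Real.cos ((lam + Real.pi)/2) := by
    have h1 := congrArg Complex.re hE
    rw [Complex.re_sum, Complex.exp_ofReal_mul_I_re] at h1
    rw [← h1]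
    refine Finset.sum_congr rfl (fun k _ => ?_)
    rw [show ((p k : ℂ) * Complex.exp (((μ k - (lam - Real.pi)/2 : ℝ):ℂ) * Complex.I)).re
        = p k * Real.cos (μ k - (lam - Real.pi)/2) from by
      rw [Complex.re_ofReal_mul, Complex.exp_ofReal_mul_I_re]]
  have hw0 : 0 < (lam + Real.pi)/2 := by linarith
  have hwpi : (lam + Real.pi)/2 < Real.pi := by linarith
  have hAcos : ∀ k, Real.cos ((lam + Real.pi)/2)
      ≤ Real.cos (μ k - (lam - Real.pi)/2) := by
    intro k
    refine cos_ge_lemma hwpi.le (abs_le.mpr ⟨?_, ?_⟩)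
    · linarith [(hmu k).1]
    · linarith [(hmu k).2]
  have hterm_p : ∀ k ∈ Finset.univ,
      p k * (Real.cos (μ k - (lam - Real.pi)/2) - Real.cos ((lam + Real.pi)/2)) = 0 := by
    rw [← Finset.sum_eq_zero_iff_of_nonneg
      (fun k _ => mul_nonneg (hppos k) (sub_nonneg.mpr (hAcos k)))]
    simp only [mul_sub]
    rw [Finset.sum_sub_distrib, hRe, ← Finset.sum_mul, hpsum, one_mul, sub_self]
  have hXeig : ∀ k, a k = 0 ∨ μ k = lam := by
    intro k
    rcases mul_eq_zero.mp (hterm_p k (Finset.mem_univ k)) with hp | hc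
    · exact Or.inl (Complex.normSq_eq_zero.mp hp)
    · right
      have hcc : Real.cos (μ k - (lam - Real.pi)/2) = Real.cos ((lam + Real.pi)/2) :=
        sub_eq_zero.mp hc
      rcases cos_eq_lemma hw0 hwpi
          (abs_le.mpr ⟨by linarith [(hmu k).1], by linarith [(hmu k).2]⟩) hcc with h | h
      · linarith
      · exfalso; have := (hmu k).1; linarith
  have hUa : U *ᵥ a = v := by
    rw [hadef, Matrix.mulVec_mulVec, hU1, Matrix.one_mulVec]
  have hXdec : A *ᵥ v = U *ᵥ (Matrix.diagonal (RCLike.ofReal ∘ μ) *ᵥ a) := by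
    conv_lhs => rw [hA.spectral_theorem, Unitary.conjStarAlgAut_apply]
    rw [← hUdef, ← hμdef, hadef, Matrix.mulVec_mulVec, Matrix.mulVec_mulVec]
  have hDa : Matrix.diagonal (RCLike.ofReal ∘ μ) *ᵥ a = ((lam : ℝ) : ℂ) • a := by
    funext k
    rw [Matrix.mulVec_diagonal]
    rcases hXeig k with h | h
    · simp [h]
    · simp only [Function.comp_apply, h, Pi.smul_apply, smul_eq_mul]
      rfl
  rw [hXdec, hDa, Matrix.mulVec_smul, hUa]


/-! ### helpers for the induction -/

lemma smul_diagonal' {k : ℕ} (t : ℂ) (f : Fin k → ℂ) :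
    t • Matrix.diagonal f = Matrix.diagonal (fun i => t * f i) := by
  ext i j
  rcases eq_or_ne i j with rfl | h
  · simp
  · simp [Matrix.diagonal_apply_ne _ h]

lemma exp_I_diagonal {k : ℕ} (f : Fin k → ℝ) :
    NormedSpace.exp (Complex.I • Matrix.diagonal (fun i => (f i : ℂ)))
      = Matrix.diagonal (fun i => Complex.exp (Complex.I * f i)) := by
  have hfn : (NormedSpace.exp fun i => Complex.I * ((f i : ℝ) : ℂ))
      = fun i => Complex.exp (Complex.I * f i) := by
    funext i; rw [Pi.coe_exp, ← Complex.exp_eq_exp_ℂ]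
  rw [smul_diagonal', Matrix.exp_diagonal, hfn]

lemma isHermitian_diagonal_ofReal {k : ℕ} (f : Fin k → ℝ) :
    (Matrix.diagonal (fun i => (f i : ℂ))).IsHermitian := by
  rw [Matrix.isHermitian_diagonal_iff]
  intro i
  exact Complex.conj_ofReal _

lemma single_dot {k : ℕ} (i₀ : Fin k) :
    star (Pi.single i₀ 1 : Fin k → ℂ) ⬝ᵥ (Pi.single i₀ 1 : Fin k → ℂ) = 1 := by
  simp [dotProduct, Pi.single_apply, apply_ite]

lemma diag_mulVec_single {k : ℕ} (w : Fin k → ℂ) (i₀ : Fin k) :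
    Matrix.diagonal w *ᵥ (Pi.single i₀ 1 : Fin k → ℂ)
      = w i₀ • (Pi.single i₀ 1 : Fin k → ℂ) := by
  funext j
  rw [Matrix.mulVec_diagonal]
  rcases eq_or_ne j i₀ with rfl | h
  · simp
  · simp [Pi.single_eq_of_ne h]

/-! ### the main induction -/

lemma key (r : ℝ) (hr0 : 0 < r) (hr1 : r < 1) :
    ∀ (m : ℕ) (d : Fin m → ℝ) (X Y : Mat m), X.IsHermitian → Y.IsHermitian →
      (∀ i, |d i| < Real.pi) →
      (NormedSpace.exp (Complex.I • X) * NormedSpace.exp (Complex.I • Y)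
        = NormedSpace.exp (Complex.I • (Matrix.diagonal (fun i => (d i : ℂ))))) →
      X.charpoly.roots = Finset.univ.val.map (fun i => ((r * d i : ℝ) : ℂ)) →
      Y.charpoly.roots = Finset.univ.val.map (fun i => (((1-r) * d i : ℝ) : ℂ)) →
      X = r • Matrix.diagonal (fun i => (d i : ℂ))
        ∧ Y = (1-r) • Matrix.diagonal (fun i => (d i : ℂ)) := by
  intro m
  induction m with
  | zero =>
    intro d X Y _ _ _ _ _ _
    constructor <;> (ext i j; exact i.elim0)
  | succ m IH =>
    intro d X Y hX hY hd hexp hrX hrY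
    have hr1' : 0 < 1 - r := by linarith
    obtain ⟨i₀, hi₀⟩ := Finite.exists_max d
    have hlam₁ : -Real.pi < d i₀ := (abs_lt.mp (hd i₀)).1
    have hlam₂ : d i₀ < Real.pi := (abs_lt.mp (hd i₀)).2
    have hmu : ∀ k, r * (d i₀ - 2*Real.pi) < hX.eigenvalues k
        ∧ hX.eigenvalues k ≤ r * d i₀ := by
      intro k
      have hmem : ((hX.eigenvalues k : ℝ) : ℂ) ∈ X.charpoly.roots := by
        rw [roots_charpoly_hermitian hX]
        exact Multiset.mem_map_of_mem _
          (Multiset.mem_map_of_mem _ (Finset.mem_val.mpr (Finset.mem_univ k)))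
      rw [hrX] at hmem
      obtain ⟨j, _, hj⟩ := Multiset.mem_map.mp hmem
      have hj' : r * d j = hX.eigenvalues k := by exact_mod_cast hj
      constructor
      · have h1 : d i₀ - 2*Real.pi < d j := by
          have := (abs_lt.mp (hd j)).1; linarith
        have := mul_lt_mul_of_pos_left h1 hr0
        linarith
      · have := mul_le_mul_of_nonneg_left (hi₀ j) hr0.le
        linarith
    have hnu : ∀ k, (1-r) * (d i₀ - 2*Real.pi) < hY.eigenvalues k
        ∧ hY.eigenvalues k ≤ (1-r) * d i₀ := by
      intro k
      have hmem : ((hY.eigenvalues k : ℝ) : ℂ) ∈ Y.charpoly.roots := by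
        rw [roots_charpoly_hermitian hY]
        exact Multiset.mem_map_of_mem _
          (Multiset.mem_map_of_mem _ (Finset.mem_val.mpr (Finset.mem_univ k)))
      rw [hrY] at hmem
      obtain ⟨j, _, hj⟩ := Multiset.mem_map.mp hmem
      have hj' : (1-r) * d j = hY.eigenvalues k := by exact_mod_cast hj
      constructor
      · have h1 : d i₀ - 2*Real.pi < d j := by
          have := (abs_lt.mp (hd j)).1; linarith
        have := mul_lt_mul_of_pos_left h1 hr1'
        linarith
      · have := mul_le_mul_of_nonneg_left (hi₀ j) hr1'.le
        linarith
    have hveq : (NormedSpace.exp (Complex.I • X) * NormedSpace.exp (Complex.I • Y))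
        *ᵥ (Pi.single i₀ 1)
        = Complex.exp (Complex.I * d i₀) • (Pi.single i₀ 1 : Fin (m+1) → ℂ) := by
      rw [hexp, exp_I_diagonal, diag_mulVec_single]
    obtain ⟨hXv, hYv⟩ := chord hX hY r (d i₀) hr0 hr1 hmu hnu (Pi.single i₀ 1)
      (single_dot i₀) hveq
    have hXpin : X = pin i₀ ((r * d i₀ : ℝ) : ℂ)
        (X.submatrix i₀.succAbove i₀.succAbove) := hermitian_eigcol_pin hX hXv
    have hYpin : Y = pin i₀ (((1-r) * d i₀ : ℝ) : ℂ)
        (Y.submatrix i₀.succAbove i₀.succAbove) := hermitian_eigcol_pin hY hYv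
    have hX₂h : (X.submatrix i₀.succAbove i₀.succAbove).IsHermitian := hX.submatrix _
    have hY₂h : (Y.submatrix i₀.succAbove i₀.succAbove).IsHermitian := hY.submatrix _
    have hdiagpin : Matrix.diagonal (fun i : Fin (m+1) => (d i : ℂ))
        = pin i₀ ((d i₀ : ℝ) : ℂ)
            (Matrix.diagonal (fun j => (d (i₀.succAbove j) : ℂ))) :=
      diagonal_pin i₀ (fun i => (d i : ℂ))
    have hexp2 : NormedSpace.exp (Complex.I • X.submatrix i₀.succAbove i₀.succAbove)
        * NormedSpace.exp (Complex.I • Y.submatrix i₀.succAbove i₀.succAbove)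
        = NormedSpace.exp
            (Complex.I • Matrix.diagonal (fun j => (d (i₀.succAbove j) : ℂ))) := by
      have h1 := hexp
      rw [hXpin, hYpin, hdiagpin] at h1
      rw [exp_I_pin hX₂h, exp_I_pin hY₂h,
        exp_I_pin (isHermitian_diagonal_ofReal (fun j => d (i₀.succAbove j))), pin_mul] at h1
      exact (pin_inj h1).2
    have hrX₂ : (X.submatrix i₀.succAbove i₀.succAbove).charpoly.roots
        = Finset.univ.val.map (fun j => ((r * d (i₀.succAbove j) : ℝ) : ℂ)) := by
      have h1 := hrX
      rw [hXpin, roots_charpoly_pin,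
        univ_val_map_succAbove i₀ (fun i => ((r * d i : ℝ) : ℂ))] at h1
      exact (Multiset.cons_inj_right _).mp h1
    have hrY₂ : (Y.submatrix i₀.succAbove i₀.succAbove).charpoly.roots
        = Finset.univ.val.map (fun j => (((1-r) * d (i₀.succAbove j) : ℝ) : ℂ)) := by
      have h1 := hrY
      rw [hYpin, roots_charpoly_pin,
        univ_val_map_succAbove i₀ (fun i => (((1-r) * d i : ℝ) : ℂ))] at h1
      exact (Multiset.cons_inj_right _).mp h1
    obtain ⟨hX₂e, hY₂e⟩ := IH (fun j => d (i₀.succAbove j))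
      (X.submatrix i₀.succAbove i₀.succAbove) (Y.submatrix i₀.succAbove i₀.succAbove)
      hX₂h hY₂h (fun j => hd _) hexp2 hrX₂ hrY₂
    constructor
    · have hrhs : r • Matrix.diagonal (fun i : Fin (m+1) => (d i : ℂ))
          = pin i₀ ((r * d i₀ : ℝ) : ℂ)
              (r • Matrix.diagonal (fun j => (d (i₀.succAbove j) : ℂ))) := by
        rw [hdiagpin, real_smul_eq r, pin_smul,
          show ((r : ℝ) : ℂ) * ((d i₀ : ℝ) : ℂ) = ((r * d i₀ : ℝ) : ℂ) from by push_cast; ring,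
          ← real_smul_eq]
      rw [hXpin, hX₂e, hrhs]
    · have hrhs : (1-r) • Matrix.diagonal (fun i : Fin (m+1) => (d i : ℂ))
          = pin i₀ (((1-r) * d i₀ : ℝ) : ℂ)
              ((1-r) • Matrix.diagonal (fun j => (d (i₀.succAbove j) : ℂ))) := by
        rw [hdiagpin, real_smul_eq (1-r), pin_smul,
          show ((1-r : ℝ) : ℂ) * ((d i₀ : ℝ) : ℂ) = (((1-r) * d i₀ : ℝ) : ℂ) from by
            push_cast; ring,
          ← real_smul_eq]
      rw [hYpin, hY₂e, hrhs]

/-! ### the single-matrix induction (injectivity with matching spectrum) -/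

lemma key2 :
    ∀ (m : ℕ) (d : Fin m → ℝ) (A : Mat m), A.IsHermitian →
      (∀ i, |d i| < Real.pi) →
      (NormedSpace.exp (Complex.I • A)
        = NormedSpace.exp (Complex.I • (Matrix.diagonal (fun i => (d i : ℂ))))) →
      A.charpoly.roots = Finset.univ.val.map (fun i => ((d i : ℝ) : ℂ)) →
      A = Matrix.diagonal (fun i => (d i : ℂ)) := by
  intro m
  induction m with
  | zero =>
    intro d A _ _ _ _
    ext i j; exact i.elim0
  | succ m IH =>
    intro d A hA hd hexp hrA
    obtain ⟨i₀, hi₀⟩ := Finite.exists_max d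
    have hlam₁ : -Real.pi < d i₀ := (abs_lt.mp (hd i₀)).1
    have hlam₂ : d i₀ < Real.pi := (abs_lt.mp (hd i₀)).2
    have hmu : ∀ k, -Real.pi < hA.eigenvalues k ∧ hA.eigenvalues k ≤ d i₀ := by
      intro k
      have hmem : ((hA.eigenvalues k : ℝ) : ℂ) ∈ A.charpoly.roots := by
        rw [roots_charpoly_hermitian hA]
        exact Multiset.mem_map_of_mem _
          (Multiset.mem_map_of_mem _ (Finset.mem_val.mpr (Finset.mem_univ k)))
      rw [hrA] at hmem
      obtain ⟨j, _, hj⟩ := Multiset.mem_map.mp hmem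
      have hj' : d j = hA.eigenvalues k := by exact_mod_cast hj
      constructor
      · have := (abs_lt.mp (hd j)).1; linarith
      · have := hi₀ j; linarith
    have hveq : NormedSpace.exp (Complex.I • A) *ᵥ (Pi.single i₀ 1)
        = Complex.exp (Complex.I * d i₀) • (Pi.single i₀ 1 : Fin (m+1) → ℂ) := by
      rw [hexp, exp_I_diagonal, diag_mulVec_single]
    have hAv := chordOne hA (d i₀) hlam₁ hlam₂ hmu (Pi.single i₀ 1) (single_dot i₀) hveq
    have hApin : A = pin i₀ ((d i₀ : ℝ) : ℂ)
        (A.submatrix i₀.succAbove i₀.succAbove) := hermitian_eigcol_pin hA hAv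
    have hA₂h : (A.submatrix i₀.succAbove i₀.succAbove).IsHermitian := hA.submatrix _
    have hdiagpin : Matrix.diagonal (fun i : Fin (m+1) => (d i : ℂ))
        = pin i₀ ((d i₀ : ℝ) : ℂ)
            (Matrix.diagonal (fun j => (d (i₀.succAbove j) : ℂ))) :=
      diagonal_pin i₀ (fun i => (d i : ℂ))
    have hexp2 : NormedSpace.exp (Complex.I • A.submatrix i₀.succAbove i₀.succAbove)
        = NormedSpace.exp
            (Complex.I • Matrix.diagonal (fun j => (d (i₀.succAbove j) : ℂ))) := by
      have h1 := hexp
      rw [hApin, hdiagpin] at h1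
      rw [exp_I_pin hA₂h,
        exp_I_pin (isHermitian_diagonal_ofReal (fun j => d (i₀.succAbove j)))] at h1
      exact (pin_inj h1).2
    have hrA₂ : (A.submatrix i₀.succAbove i₀.succAbove).charpoly.roots
        = Finset.univ.val.map (fun j => ((d (i₀.succAbove j) : ℝ) : ℂ)) := by
      have h1 := hrA
      rw [hApin, roots_charpoly_pin,
        univ_val_map_succAbove i₀ (fun i => ((d i : ℝ) : ℂ))] at h1
      exact (Multiset.cons_inj_right _).mp h1
    have hA₂e := IH (fun j => d (i₀.succAbove j))
      (A.submatrix i₀.succAbove i₀.succAbove) hA₂h (fun j => hd _) hexp2 hrA₂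
    rw [hApin, hA₂e, hdiagpin]

end Stmt9Aux

theorem stmt9 {n : ℕ} (X Y Z : Mat n) (hX : X.IsHermitian) (hY : Y.IsHermitian)
    (hZ : Z.IsHermitian)
    (hexp : NormedSpace.exp (Complex.I • Z)
      = NormedSpace.exp (Complex.I • X) * NormedSpace.exp (Complex.I • Y))
    (hZn : specNorm Z < Real.pi) (r : ℝ) (hr : r ∈ Set.Icc (0 : ℝ) 1)
    (hXe : ∀ k, eigsDesc hX k = r * eigsDesc hZ k)
    (hYe : ∀ k, eigsDesc hY k = (1 - r) * eigsDesc hZ k) :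
    X = r • Z ∧ Y = (1 - r) • Z := by
  classical
  open Stmt9Aux in
  obtain ⟨hr0, hr1⟩ := hr
  set d := hZ.eigenvalues with hddef
  set U := (hZ.eigenvectorUnitary : Mat n) with hUdef
  have hU1 : U * star U = 1 := Matrix.mem_unitaryGroup_iff.mp hZ.eigenvectorUnitary.2
  have hU2 : star U * U = 1 := Matrix.mem_unitaryGroup_iff'.mp hZ.eigenvectorUnitary.2
  -- eigenvalue bounds from the spectral norm
  have hd : ∀ i, |d i| < Real.pi := by
    intro i
    have h1 : Matrix.toEuclideanCLM (𝕜 := ℂ) (n := Fin n) Z (hZ.eigenvectorBasis i)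
        = (hZ.eigenvalues i : ℝ) • (hZ.eigenvectorBasis i) := by
      apply WithLp.ofLp_injective 2
      rw [Matrix.ofLp_toEuclideanCLM]
      rw [WithLp.ofLp_smul]
      exact hZ.mulVec_eigenvectorBasis i
    have h2 : ‖Matrix.toEuclideanCLM (𝕜 := ℂ) (n := Fin n) Z (hZ.eigenvectorBasis i)‖
        = |hZ.eigenvalues i| := by
      rw [h1, norm_smul, Real.norm_eq_abs, hZ.eigenvectorBasis.orthonormal.1 i, mul_one]
    have h3 := (Matrix.toEuclideanCLM (𝕜 := ℂ) (n := Fin n) Z).le_opNorm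
      (hZ.eigenvectorBasis i)
    rw [h2, hZ.eigenvectorBasis.orthonormal.1 i, mul_one] at h3
    calc |d i| ≤ specNorm Z := h3
      _ < Real.pi := hZn
  -- the diagonalization
  have hZdiag : star U * Z * U = Matrix.diagonal (fun i => (d i : ℂ)) := by
    have h0 := hZ.conjStarAlgAut_star_eigenvectorUnitary
    rw [Unitary.conjStarAlgAut_star_apply, ← hUdef] at h0
    rw [h0]
    rfl
  have hZspec : Z = U * Matrix.diagonal (fun i => (d i : ℂ)) * star U := by
    rw [← hZdiag]
    calc Z = (U * star U) * Z * (U * star U) := by rw [hU1, one_mul, mul_one]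
      _ = U * (star U * Z * U) * star U := by noncomm_ring
  -- conjugation facts
  have hconj : ∀ A : Mat n, NormedSpace.exp (Complex.I • (star U * A * U))
      = star U * NormedSpace.exp (Complex.I • A) * U := by
    intro A
    have h1 : Complex.I • (star U * A * U) = star U * (Complex.I • A) * U := by
      rw [mul_smul_comm, smul_mul_assoc]
    rw [h1]
    exact Matrix.exp_units_conj ⟨star U, U, hU2, hU1⟩ _
  have hsandwich : ∀ P Q : Mat n,
      (star U * P * U) * (star U * Q * U) = star U * (P * Q) * U := by
    intro P Q
    calc (star U * P * U) * (star U * Q * U)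
        = star U * P * (U * star U) * Q * U := by noncomm_ring
      _ = star U * P * 1 * Q * U := by rw [hU1]
      _ = star U * (P * Q) * U := by noncomm_ring
  have hstarstar : (star U)ᴴ = U := by
    rw [Matrix.star_eq_conjTranspose, Matrix.conjTranspose_conjTranspose]
  have hherm : ∀ {A : Mat n}, A.IsHermitian → (star U * A * U).IsHermitian := by
    intro A hA
    have h := Matrix.isHermitian_mul_mul_conjTranspose (star U) hA
    rwa [hstarstar] at h
  have hroots : ∀ A : Mat n, (star U * A * U).charpoly.roots = A.charpoly.roots := by
    intro A
    have h := charpoly_conj (star U) A (by rw [star_star]; exact hU2)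
    rw [star_star] at h
    rw [h]
  -- multiset identities for the hypotheses
  have hmultX : X.charpoly.roots
      = Finset.univ.val.map (fun i => ((r * d i : ℝ) : ℂ)) := by
    rw [roots_charpoly_hermitian hX]
    have h1 : Finset.univ.val.map hX.eigenvalues
        = Multiset.map (fun t => r * t) (Finset.univ.val.map d) := by
      rw [← multiset_eigsDesc hX, funext hXe,
        show (fun k => r * eigsDesc hZ k) = (fun t => r * t) ∘ eigsDesc hZ from rfl,
        ← Multiset.map_map, multiset_eigsDesc hZ]
    rw [h1, Multiset.map_map, Multiset.map_map]
    rfl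
  have hmultY : Y.charpoly.roots
      = Finset.univ.val.map (fun i => (((1-r) * d i : ℝ) : ℂ)) := by
    rw [roots_charpoly_hermitian hY]
    have h1 : Finset.univ.val.map hY.eigenvalues
        = Multiset.map (fun t => (1-r) * t) (Finset.univ.val.map d) := by
      rw [← multiset_eigsDesc hY, funext hYe,
        show (fun k => (1-r) * eigsDesc hZ k) = (fun t => (1-r) * t) ∘ eigsDesc hZ from rfl,
        ← Multiset.map_map, multiset_eigsDesc hZ]
    rw [h1, Multiset.map_map, Multiset.map_map]
    rfl
  -- reassembly helper
  have hback : ∀ {A : Mat n} {c : ℝ}, star U * A * U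
      = c • Matrix.diagonal (fun i => (d i : ℂ)) → A = c • Z := by
    intro A c hA
    calc A = (U * star U) * A * (U * star U) := by rw [hU1, one_mul, mul_one]
      _ = U * (star U * A * U) * star U := by noncomm_ring
      _ = U * (c • Matrix.diagonal (fun i => (d i : ℂ))) * star U := by rw [hA]
      _ = c • (U * Matrix.diagonal (fun i => (d i : ℂ)) * star U) := by
          rw [mul_smul_comm, smul_mul_assoc]
      _ = c • Z := by rw [← hZspec]
  by_cases hc0 : r = 0
  · -- X = 0 and Y = Z
    subst hc0
    have hX0 : ∀ k, hX.eigenvalues k = 0 := by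
      intro k
      have h0 : hX.eigenvalues k
          = eigsDesc hX ((Fin.revPerm.trans (Tuple.sort hX.eigenvalues)).symm k) := by
        show hX.eigenvalues k
          = (hX.eigenvalues ∘ ⇑(Fin.revPerm.trans (Tuple.sort hX.eigenvalues)))
              ((Fin.revPerm.trans (Tuple.sort hX.eigenvalues)).symm k)
        rw [Function.comp_apply, Equiv.apply_symm_apply]
      rw [h0, hXe]
      ring
    have hXzero : X = 0 := by
      have h1 := hX.spectral_theorem
      rw [Unitary.conjStarAlgAut_apply] at h1
      have h2 : Matrix.diagonal (RCLike.ofReal ∘ hX.eigenvalues) = (0 : Mat n) := by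
        have h3 : RCLike.ofReal ∘ hX.eigenvalues = fun _ : Fin n => (0 : ℂ) := by
          funext k
          simp [hX0 k]
        rw [h3, Matrix.diagonal_zero]
      rw [h2] at h1
      rw [h1, mul_zero, zero_mul]
    have hexpX1 : NormedSpace.exp (Complex.I • X) = 1 := by
      rw [hXzero, smul_zero, NormedSpace.exp_zero]
    have hYkey : star U * Y * U = Matrix.diagonal (fun i => (d i : ℂ)) := by
      refine key2 n d (star U * Y * U) (hherm hY) hd ?_ ?_
      · rw [hconj Y, show NormedSpace.exp (Complex.I • Y)
            = NormedSpace.exp (Complex.I • Z) from by rw [hexp, hexpX1, one_mul],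
          ← hconj Z]
        rw [show star U * Z * U = Matrix.diagonal (fun i => (d i : ℂ)) from hZdiag]
      · rw [hroots Y, hmultY]
        congr 1
        funext i
        norm_num
    constructor
    · rw [hXzero, zero_smul]
    · refine hback ?_
      rw [hYkey, show ((1:ℝ) - 0) = 1 by norm_num, one_smul]
  · by_cases hc1 : r = 1
    · -- Y = 0 and X = Z
      subst hc1
      have hY0 : ∀ k, hY.eigenvalues k = 0 := by
        intro k
        have h0 : hY.eigenvalues k
            = eigsDesc hY ((Fin.revPerm.trans (Tuple.sort hY.eigenvalues)).symm k) := by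
          show hY.eigenvalues k
            = (hY.eigenvalues ∘ ⇑(Fin.revPerm.trans (Tuple.sort hY.eigenvalues)))
                ((Fin.revPerm.trans (Tuple.sort hY.eigenvalues)).symm k)
          rw [Function.comp_apply, Equiv.apply_symm_apply]
        rw [h0, hYe]
        ring
      have hYzero : Y = 0 := by
        have h1 := hY.spectral_theorem
        rw [Unitary.conjStarAlgAut_apply] at h1
        have h2 : Matrix.diagonal (RCLike.ofReal ∘ hY.eigenvalues) = (0 : Mat n) := by
          have h3 : RCLike.ofReal ∘ hY.eigenvalues = fun _ : Fin n => (0 : ℂ) := by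
            funext k
            simp [hY0 k]
          rw [h3, Matrix.diagonal_zero]
        rw [h2] at h1
        rw [h1, mul_zero, zero_mul]
      have hexpY1 : NormedSpace.exp (Complex.I • Y) = 1 := by
        rw [hYzero, smul_zero, NormedSpace.exp_zero]
      have hXkey : star U * X * U = Matrix.diagonal (fun i => (d i : ℂ)) := by
        refine key2 n d (star U * X * U) (hherm hX) hd ?_ ?_
        · rw [hconj X, show NormedSpace.exp (Complex.I • X)
              = NormedSpace.exp (Complex.I • Z) from by rw [hexp, hexpY1, mul_one],
            ← hconj Z]
          rw [show star U * Z * U = Matrix.diagonal (fun i => (d i : ℂ)) from hZdiag]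
        · rw [hroots X, hmultX]
          congr 1
          funext i
          norm_num
      constructor
      · refine hback ?_
        rw [hXkey, one_smul]
      · rw [hYzero, show ((1:ℝ) - 1) = 0 by norm_num, zero_smul]
    · -- main case
      have hr0' : 0 < r := lt_of_le_of_ne hr0 (Ne.symm hc0)
      have hr1' : r < 1 := lt_of_le_of_ne hr1 hc1
      have hexp' : NormedSpace.exp (Complex.I • (star U * X * U))
          * NormedSpace.exp (Complex.I • (star U * Y * U))
          = NormedSpace.exp
              (Complex.I • Matrix.diagonal (fun i => (d i : ℂ))) := by
        rw [hconj X, hconj Y, hsandwich, ← hexp, ← hconj Z]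
        rw [show star U * Z * U = Matrix.diagonal (fun i => (d i : ℂ)) from hZdiag]
      obtain ⟨hx', hy'⟩ := key r hr0' hr1' n d (star U * X * U) (star U * Y * U)
        (hherm hX) (hherm hY) hd hexp'
        (by rw [hroots X, hmultX]) (by rw [hroots Y, hmultY])
      exact ⟨hback hx', hback hy'⟩

end
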